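/- arXiv:2502.07530 — 6 statements merged into one kernel-verified Lean document; each statement's English description precedes it below -/
import Mathlib

section
/- Let n ≥ 1 be an integer and 0 < s < 1. For every τ > 0 and every y ∈ ℝⁿ with |y| ≥ 1 one has G(y,τ) ≤ exp(−|y|/(4nτ)) · Σ_{ε∈{−1,1}ⁿ} G(y+η_ε, τ). (Directional perturbation average estimate for the fully fractional heat kernel, part (i) of the key kernel lemma.) -/
open MeasureTheory Metric Set

noncomputable section

/-- ℝⁿ as a Euclidean space. -/
abbrev Euc (n : ℕ) : Type := EuclideanSpace ℝ (Fin n)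

/-- The fully fractional heat kernel
`G(z,τ) = C_{n,s} τ^{-(n/2+1-s)} exp(-|z|²/(4τ))` for `τ > 0`, and `0` for `τ ≤ 0`,
where `C_{n,s} = (4π)^{-n/2} |Γ(-s)|⁻¹`. -/
def fracHeatKernel (n : ℕ) (s : ℝ) (z : Euc n) (τ : ℝ) : ℝ :=
  if 0 < τ then
    (4 * Real.pi) ^ (-(n : ℝ) / 2) * |Real.Gamma (-s)|⁻¹ *
      τ ^ (-((n : ℝ) / 2 + 1 - s)) * Real.exp (-‖z‖ ^ 2 / (4 * τ))
  else 0

/-- For a sign vector `ε ∈ {-1,1}ⁿ` (encoded by `ε : Fin n → Bool`), the perturbation vector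
`η_ε = (1/n) ε ∈ ℝⁿ`, of norm `1/√n`. -/
def signPerturb (n : ℕ) (ε : Fin n → Bool) : Euc n :=
  (EuclideanSpace.equiv (Fin n) ℝ).symm fun i => (1 / (n : ℝ)) * (if ε i then 1 else -1)

lemma fracHeatKernel_nonneg (n : ℕ) (s : ℝ) (z : Euc n) (τ : ℝ) :
    0 ≤ fracHeatKernel n s z τ := by
  unfold fracHeatKernel
  split
  · have := Real.pi_pos
    positivity
  · exact le_refl 0

/-- Directional perturbation average estimate for the fully fractional heat kernel:
for `τ > 0` and `|y| ≥ 1`,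
`G(y,τ) ≤ exp(-|y|/(4nτ)) · Σ_{ε ∈ {-1,1}ⁿ} G(y + η_ε, τ)`. -/
theorem kernel_directional_perturbation_average
    (n : ℕ) (hn : 1 ≤ n) (s : ℝ) (hs0 : 0 < s) (hs1 : s < 1)
    (τ : ℝ) (hτ : 0 < τ) (y : Euc n) (hy : 1 ≤ ‖y‖) :
    fracHeatKernel n s y τ ≤
      Real.exp (-‖y‖ / (4 * (n : ℝ) * τ)) *
        ∑ ε : Fin n → Bool, fracHeatKernel n s (y + signPerturb n ε) τ := by
  classical
  have hn1 : (1 : ℝ) ≤ (n : ℝ) := by exact_mod_cast hn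
  have hnpos : (0 : ℝ) < n := lt_of_lt_of_le one_pos hn1
  set C : ℝ := (4 * Real.pi) ^ (-(n : ℝ) / 2) * |Real.Gamma (-s)|⁻¹ *
      τ ^ (-((n : ℝ) / 2 + 1 - s)) with hC
  have hCpos : 0 ≤ C := by
    have := Real.pi_pos
    positivity
  have hker : ∀ z : Euc n, fracHeatKernel n s z τ = C * Real.exp (-‖z‖ ^ 2 / (4 * τ)) := by
    intro z
    rw [fracHeatKernel, if_pos hτ, hC]
  let ε0 : Fin n → Bool := fun i => decide (y i < 0)
  set η : Euc n := signPerturb n ε0 with hηdef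
  have hηi : ∀ i, η i = (1 / (n : ℝ)) * (if y i < 0 then 1 else -1) := by
    intro i
    simp [hηdef, signPerturb, ε0, EuclideanSpace.equiv]
  have hsum_abs : ‖y‖ ≤ ∑ i, |y i| := by
    rw [EuclideanSpace.norm_eq]
    have h1 : ∑ i, ‖y i‖ ^ 2 ≤ (∑ i, |y i|) ^ 2 := by
      simp only [Real.norm_eq_abs]
      exact Finset.sum_sq_le_sq_sum_of_nonneg (fun i _ => abs_nonneg _)
    calc Real.sqrt (∑ i, ‖y i‖ ^ 2) ≤ Real.sqrt ((∑ i, |y i|) ^ 2) := Real.sqrt_le_sqrt h1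
      _ = ∑ i, |y i| := Real.sqrt_sq (Finset.sum_nonneg fun i _ => abs_nonneg _)
  have hinner : (inner ℝ y η : ℝ) = -(1 / (n : ℝ)) * ∑ i, |y i| := by
    rw [PiLp.inner_apply]
    rw [Finset.mul_sum]
    apply Finset.sum_congr rfl
    intro i _
    rw [hηi i]
    simp only [RCLike.inner_apply, starRingEnd_apply, star_trivial]
    by_cases h : y i < 0
    · rw [if_pos h, abs_of_neg h]; ring
    · rw [if_neg h, abs_of_nonneg (not_lt.mp h)]; ring
  have hnormη : ‖η‖ ^ 2 = 1 / (n : ℝ) := by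
    rw [EuclideanSpace.norm_eq, Real.sq_sqrt (Finset.sum_nonneg fun i _ => sq_nonneg _)]
    have : ∀ i, ‖η i‖ ^ 2 = 1 / (n : ℝ) ^ 2 := by
      intro i
      rw [hηi i]
      by_cases h : y i < 0 <;> simp [h] <;> ring_nf <;> simp [abs_of_nonneg (by positivity : (0:ℝ) ≤ (n:ℝ)⁻¹)]
    rw [Finset.sum_congr rfl fun i _ => this i]
    rw [Finset.sum_const, Finset.card_univ, Fintype.card_fin]
    field_simp
    ring_nf
    field_simp
  have hkey : ‖y + η‖ ^ 2 + ‖y‖ / n ≤ ‖y‖ ^ 2 := by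
    have hexp := norm_add_sq_real y η
    rw [hinner, hnormη] at hexp
    rw [hexp]
    have hinv : (0:ℝ) < 1 / (n:ℝ) := by positivity
    have h3 : (1 / (n : ℝ)) * ‖y‖ ≤ (1 / (n : ℝ)) * ∑ i, |y i| :=
      mul_le_mul_of_nonneg_left hsum_abs hinv.le
    have h4 : (1 / (n : ℝ)) * 1 ≤ (1 / (n : ℝ)) * ‖y‖ :=
      mul_le_mul_of_nonneg_left hy hinv.le
    have h5 : ‖y‖ / (n:ℝ) = (1 / (n:ℝ)) * ‖y‖ := by ring
    rw [h5]
    linarith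
  -- exponent inequality
  have hkey' : (n:ℝ) * ‖y + η‖ ^ 2 + ‖y‖ ≤ (n:ℝ) * ‖y‖ ^ 2 := by
    have h := mul_le_mul_of_nonneg_left hkey hnpos.le
    have h6 : (n:ℝ) * (‖y‖ / (n:ℝ)) = ‖y‖ := by field_simp
    calc (n:ℝ) * ‖y + η‖ ^ 2 + ‖y‖ = (n:ℝ) * (‖y + η‖ ^ 2 + ‖y‖ / (n:ℝ)) := by
            rw [mul_add, h6]
      _ ≤ (n:ℝ) * ‖y‖ ^ 2 := h
  have hexp_ineq : -‖y‖ ^ 2 / (4 * τ) ≤ -‖y‖ / (4 * (n : ℝ) * τ) + -‖y + η‖ ^ 2 / (4 * τ) := by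
    rw [div_add_div _ _ (by positivity : (4 * (n:ℝ) * τ) ≠ 0) (by positivity : (4 * τ) ≠ 0),
      div_le_div_iff₀ (by positivity) (by positivity)]
    nlinarith [mul_le_mul_of_nonneg_right hkey' (by positivity : (0:ℝ) ≤ 16 * τ ^ 2)]
  have hterm : fracHeatKernel n s y τ ≤
      Real.exp (-‖y‖ / (4 * (n : ℝ) * τ)) * fracHeatKernel n s (y + η) τ := by
    have hre : Real.exp (-‖y‖ / (4 * (n : ℝ) * τ)) * (C * Real.exp (-‖y + η‖ ^ 2 / (4 * τ)))
        = C * Real.exp (-‖y‖ / (4 * (n : ℝ) * τ) + -‖y + η‖ ^ 2 / (4 * τ)) := by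
      rw [Real.exp_add]; ring
    rw [hker y, hker (y + η), hre]
    exact mul_le_mul_of_nonneg_left (Real.exp_le_exp.mpr hexp_ineq) hCpos
  refine hterm.trans ?_
  apply mul_le_mul_of_nonneg_left _ (le_of_lt (Real.exp_pos _))
  exact Finset.single_le_sum (f := fun ε => fracHeatKernel n s (y + signPerturb n ε) τ)
    (fun ε _ => fracHeatKernel_nonneg n s _ τ) (Finset.mem_univ ε0)

end
end

section
/- Let n ≥ 1 be an integer and 0 < s < 1. There exists a constant C depending only on n such that for every τ > 0 and every y ∈ ℝⁿ with |y| ≥ 1, the first and second spatial partial derivatives of the fully fractional heat kernel satisfy |∂_{y_i} G(y,τ)| ≤ C Σ_{ε∈{−1,1}ⁿ} G(y+η_ε, τ) for every 1 ≤ i ≤ n, and |∂_{y_i}∂_{y_j} G(y,τ)| ≤ C Σ_{ε∈{−1,1}ⁿ} G(y+η_ε, τ) for all 1 ≤ i,j ≤ n. -/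
open scoped RealInnerProductSpace

open MeasureTheory Metric Set

noncomputable section

section Aux

variable {n : ℕ}

def gauss (n : ℕ) (τ c : ℝ) (z : Euc n) : ℝ := c * Real.exp (-‖z‖ ^ 2 / (4 * τ))

lemma gauss_hasFDerivAt (τ c : ℝ) (y : Euc n) :
    HasFDerivAt (gauss n τ c)
      ((gauss n τ c y * (-(2 * τ)⁻¹)) • (innerSL ℝ y : Euc n →L[ℝ] ℝ)) y := by
  have h1 : HasFDerivAt (fun z : Euc n => ‖z‖ ^ 2) (2 • (innerSL ℝ y)) y :=
    (hasStrictFDerivAt_norm_sq y).hasFDerivAt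
  have h2 := ((h1.const_mul (-(4 * τ)⁻¹)).exp).const_mul c
  have hfun : (fun z : Euc n => c * Real.exp (-(4 * τ)⁻¹ * ‖z‖ ^ 2)) = gauss n τ c := by
    funext z; simp only [gauss]; congr 1; ring
  rw [hfun] at h2
  refine h2.congr_fderiv (Eq.symm ?_)
  ext v
  simp only [gauss, ContinuousLinearMap.smul_apply, smul_eq_mul,
    show -(4 * τ)⁻¹ * ‖y‖ ^ 2 = -‖y‖ ^ 2 / (4 * τ) from by ring]
  ring_nf

lemma gauss_fderiv_single (τ c : ℝ) (y : Euc n) (j : Fin n) :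
    fderiv ℝ (gauss n τ c) y (EuclideanSpace.single j 1) =
      (-(2 * τ)⁻¹) * (y j * gauss n τ c y) := by
  rw [(gauss_hasFDerivAt τ c y).fderiv]
  simp only [ContinuousLinearMap.smul_apply, innerSL_apply_apply, smul_eq_mul,
    EuclideanSpace.inner_single_right, RCLike.inner_apply, starRingEnd_apply, star_trivial]
  ring

lemma gauss_hasFDerivAt2 (τ c : ℝ) (y : Euc n) (j : Fin n) :
    HasFDerivAt (fun z : Euc n => (-(2 * τ)⁻¹) * (z j * gauss n τ c z))
      ((-(2 * τ)⁻¹) • ((y j • ((gauss n τ c y * (-(2 * τ)⁻¹)) • (innerSL ℝ y : Euc n →L[ℝ] ℝ)))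
        + gauss n τ c y • (EuclideanSpace.proj j : Euc n →L[ℝ] ℝ))) y := by
  exact (((EuclideanSpace.proj j).hasFDerivAt.mul (gauss_hasFDerivAt τ c y)).const_mul _)

lemma gauss_fderiv2_single (τ c : ℝ) (y : Euc n) (i j : Fin n) :
    fderiv ℝ (fun z : Euc n => fderiv ℝ (gauss n τ c) z (EuclideanSpace.single j 1)) y
      (EuclideanSpace.single i 1) =
      (-(2 * τ)⁻¹) * ((if j = i then 1 else 0) * gauss n τ c y
        + y j * (gauss n τ c y * (-(2 * τ)⁻¹) * y i)) := by
  have hfun : (fun z : Euc n => fderiv ℝ (gauss n τ c) z (EuclideanSpace.single j 1)) =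
      fun z : Euc n => (-(2 * τ)⁻¹) * (z j * gauss n τ c z) := by
    funext z; exact gauss_fderiv_single τ c z j
  rw [hfun, (gauss_hasFDerivAt2 τ c y j).fderiv]
  simp only [ContinuousLinearMap.smul_apply, ContinuousLinearMap.add_apply, smul_eq_mul,
    innerSL_apply_apply, EuclideanSpace.inner_single_right, RCLike.inner_apply, starRingEnd_apply,
    star_trivial, PiLp.proj_apply, EuclideanSpace.single_apply]
  ring_nf

lemma signPerturb_apply (ε : Fin n → Bool) (i : Fin n) :
    signPerturb n ε i = (1 / (n : ℝ)) * (if ε i then 1 else -1) := by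
  simp [signPerturb, EuclideanSpace.equiv, WithLp.equiv_symm_apply]

lemma gauss_nonneg {τ c : ℝ} (hc : 0 ≤ c) (z : Euc n) : 0 ≤ gauss n τ c z :=
  mul_nonneg hc (Real.exp_pos _).le

lemma norm_le_sum_abs (y : Euc n) : ‖y‖ ≤ ∑ i, |y i| := by
  rw [EuclideanSpace.norm_eq]
  have h1 : ∑ i, ‖y i‖ ^ 2 ≤ (∑ i, |y i|) ^ 2 := by
    simpa [Real.norm_eq_abs] using
      Finset.sum_sq_le_sq_sum_of_nonneg (s := Finset.univ) (f := fun i => |y i|)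
        (fun i _ => abs_nonneg (y i))
  calc Real.sqrt (∑ i, ‖y i‖ ^ 2) ≤ Real.sqrt ((∑ i, |y i|) ^ 2) := Real.sqrt_le_sqrt h1
    _ = ∑ i, |y i| := Real.sqrt_sq (Finset.sum_nonneg fun i _ => abs_nonneg _)

set_option maxHeartbeats 1000000 in
lemma key (hn : 1 ≤ n) {τ c : ℝ} (hτ : 0 < τ) (hc : 0 ≤ c) (y : Euc n) (hy : 1 ≤ ‖y‖) :
    (‖y‖ ^ 2 / (4 * τ ^ 2) + 1 / (2 * τ) + ‖y‖ / (2 * τ)) * gauss n τ c y ≤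
      (20 * (n : ℝ) ^ 2) * ∑ ε : Fin n → Bool, gauss n τ c (y + signPerturb n ε) := by
  have hn0 : (0 : ℝ) < n := by exact_mod_cast hn
  set ε₀ : Fin n → Bool := fun i => decide (y i < 0) with hε₀
  set η := signPerturb n ε₀ with hη
  -- inner product bound
  have hinner : (inner ℝ y η : ℝ) = -(1 / n) * ∑ i, |y i| := by
    rw [PiLp.inner_apply]
    rw [Finset.mul_sum]
    refine Finset.sum_congr rfl fun i _ => ?_
    simp only [hη, signPerturb_apply, RCLike.inner_apply, starRingEnd_apply, star_trivial, hε₀,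
      decide_eq_true_eq]
    by_cases h : y i < 0
    · rw [if_pos h, abs_of_neg h]; ring
    · rw [if_neg h, abs_of_nonneg (not_lt.1 h)]; ring
  have hnormη : ‖η‖ ^ 2 = 1 / n := by
    rw [← real_inner_self_eq_norm_sq, PiLp.inner_apply]
    have : ∀ i : Fin n, (inner ℝ (η i) (η i) : ℝ) = 1 / (n : ℝ) ^ 2 := by
      intro i
      simp only [hη, signPerturb_apply, RCLike.inner_apply, starRingEnd_apply, star_trivial]
      by_cases h : ε₀ i <;> simp [h] <;> ring
    rw [Finset.sum_congr rfl fun i _ => this i, Finset.sum_const, Finset.card_univ,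
      Fintype.card_fin, nsmul_eq_mul]
    field_simp
  have hexp : ‖y + η‖ ^ 2 ≤ ‖y‖ ^ 2 - ‖y‖ / n := by
    rw [norm_add_sq_real, hinner, hnormη]
    have h1 : ‖y‖ ≤ ∑ i, |y i| := norm_le_sum_abs y
    have hp : 0 ≤ (1 / (n:ℝ)) * (2 * (∑ i, |y i|) - ‖y‖ - 1) :=
      mul_nonneg (by positivity) (by linarith)
    have hq : ‖y‖ ^ 2 - ‖y‖ / n - (‖y‖ ^ 2 + 2 * (-(1 / (n:ℝ)) * ∑ i, |y i|) + 1 / n) =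
        (1 / (n:ℝ)) * (2 * (∑ i, |y i|) - ‖y‖ - 1) := by ring
    linarith [hp, hq]
  have h4τ : (0:ℝ) < 4 * τ := by linarith
  have hgy : gauss n τ c y * Real.exp (‖y‖ / (n * (4 * τ))) ≤ gauss n τ c (y + η) := by
    unfold gauss
    rw [mul_assoc, ← Real.exp_add]
    have harg : -‖y‖ ^ 2 / (4 * τ) + ‖y‖ / (n * (4 * τ)) ≤ -‖y + η‖ ^ 2 / (4 * τ) := by
      rw [show -‖y‖ ^ 2 / (4 * τ) + ‖y‖ / (n * (4 * τ)) = (-‖y‖ ^ 2 + ‖y‖ / n) / (4 * τ) from by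
        field_simp]
      gcongr
      linarith [hexp]
    exact mul_le_mul_of_nonneg_left (Real.exp_le_exp.mpr harg) hc
  set a := ‖y‖ / (n * (4 * τ)) with ha
  have ha0 : 0 ≤ a := by positivity
  have hya : ‖y‖ = 4 * n * τ * a := by rw [ha]; field_simp; try ring
  have he1 : a ≤ Real.exp a := by linarith [Real.add_one_le_exp a]
  have he2 : a ^ 2 ≤ 4 * Real.exp a := by
    have h := Real.add_one_le_exp (a / 2)
    have hee : Real.exp (a / 2) * Real.exp (a / 2) = Real.exp a := by
      rw [← Real.exp_add]; ring_nf
    nlinarith [Real.exp_pos (a / 2), ha0]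
  have hn1 : (1:ℝ) ≤ n := by exact_mod_cast hn
  have hm : ‖y‖ ^ 2 / (4 * τ ^ 2) + 1 / (2 * τ) + ‖y‖ / (2 * τ) ≤
      20 * (n : ℝ) ^ 2 * Real.exp a := by
    have h1τ : 1 / (2 * τ) ≤ ‖y‖ / (2 * τ) := by gcongr
    have e1 : ‖y‖ ^ 2 / (4 * τ ^ 2) = 4 * (n : ℝ) ^ 2 * a ^ 2 := by
      rw [hya]; field_simp; try ring
    have e2 : ‖y‖ / (2 * τ) = 2 * (n : ℝ) * a := by rw [hya]; field_simp; try ring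
    have p1 : 4 * (n : ℝ) ^ 2 * a ^ 2 ≤ 4 * (n : ℝ) ^ 2 * (4 * Real.exp a) :=
      mul_le_mul_of_nonneg_left he2 (by positivity)
    have p2 : 2 * (n : ℝ) * a ≤ 2 * (n : ℝ) * Real.exp a :=
      mul_le_mul_of_nonneg_left he1 (by positivity)
    have p3 : 2 * (n : ℝ) * Real.exp a ≤ 2 * (n : ℝ) ^ 2 * Real.exp a := by
      have : (n:ℝ) ≤ (n:ℝ)^2 := by nlinarith
      nlinarith [Real.exp_pos a]
    linarith
  have hsum : gauss n τ c (y + η) ≤ ∑ ε : Fin n → Bool, gauss n τ c (y + signPerturb n ε) := by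
    rw [hη]
    exact Finset.single_le_sum (f := fun ε => gauss n τ c (y + signPerturb n ε))
      (fun ε _ => gauss_nonneg hc _) (Finset.mem_univ ε₀)
  calc (‖y‖ ^ 2 / (4 * τ ^ 2) + 1 / (2 * τ) + ‖y‖ / (2 * τ)) * gauss n τ c y
      ≤ (20 * (n : ℝ) ^ 2 * Real.exp a) * gauss n τ c y :=
        mul_le_mul_of_nonneg_right hm (gauss_nonneg hc y)
    _ = 20 * (n : ℝ) ^ 2 * (gauss n τ c y * Real.exp a) := by ring
    _ ≤ 20 * (n : ℝ) ^ 2 * gauss n τ c (y + η) :=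
        mul_le_mul_of_nonneg_left hgy (by positivity)
    _ ≤ _ := mul_le_mul_of_nonneg_left hsum (by positivity)

lemma abs_coord_le_norm (y : Euc n) (i : Fin n) : |y i| ≤ ‖y‖ := by
  rw [EuclideanSpace.norm_eq]
  calc |y i| = Real.sqrt (‖y i‖ ^ 2) := by
        rw [Real.norm_eq_abs, Real.sqrt_sq_eq_abs, abs_abs]
    _ ≤ Real.sqrt (∑ j, ‖y j‖ ^ 2) := Real.sqrt_le_sqrt
        (Finset.single_le_sum (f := fun j => ‖y j‖ ^ 2) (fun j _ => sq_nonneg _)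
          (Finset.mem_univ i))

end Aux

/-- There is a constant `C = C(n)` such that for all `0 < s < 1`, `τ > 0` and `|y| ≥ 1`,
the first and second spatial partial derivatives of the fully fractional heat kernel satisfy
`|∂_{y_i} G(y,τ)| ≤ C Σ_ε G(y+η_ε,τ)` and `|∂_{y_i}∂_{y_j} G(y,τ)| ≤ C Σ_ε G(y+η_ε,τ)`. -/
theorem kernel_spatial_derivative_estimates (n : ℕ) (hn : 1 ≤ n) :
    ∃ C : ℝ, 0 < C ∧ ∀ s : ℝ, 0 < s → s < 1 → ∀ τ : ℝ, 0 < τ →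
      ∀ y : Euc n, 1 ≤ ‖y‖ →
        (∀ i : Fin n,
          |fderiv ℝ (fun z => fracHeatKernel n s z τ) y (EuclideanSpace.single i 1)| ≤
            C * ∑ ε : Fin n → Bool, fracHeatKernel n s (y + signPerturb n ε) τ) ∧
        (∀ i j : Fin n,
          |fderiv ℝ (fun z =>
              fderiv ℝ (fun z' => fracHeatKernel n s z' τ) z (EuclideanSpace.single j 1))
            y (EuclideanSpace.single i 1)| ≤
            C * ∑ ε : Fin n → Bool, fracHeatKernel n s (y + signPerturb n ε) τ) := by
  have hn0 : (0:ℝ) < n := by exact_mod_cast hn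
  refine ⟨20 * (n:ℝ)^2, by positivity, ?_⟩
  intro s hs0 hs1 τ hτ y hy
  set c' : ℝ := (4 * Real.pi) ^ (-(n : ℝ) / 2) * |Real.Gamma (-s)|⁻¹ *
    τ ^ (-((n : ℝ) / 2 + 1 - s)) with hc'def
  have hc' : 0 ≤ c' := by positivity
  have hker' : ∀ z : Euc n, fracHeatKernel n s z τ = gauss n τ c' z := by
    intro z; simp only [fracHeatKernel, if_pos hτ, gauss, hc'def]
  have hkey := key hn hτ hc' y hy
  have hg0 : 0 ≤ gauss n τ c' y := gauss_nonneg hc' y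
  have h2τ : (0:ℝ) < 2 * τ := by linarith
  have hsumeq : ∑ ε : Fin n → Bool, fracHeatKernel n s (y + signPerturb n ε) τ =
      ∑ ε : Fin n → Bool, gauss n τ c' (y + signPerturb n ε) :=
    Finset.sum_congr rfl fun ε _ => hker' _
  have hmnn : 0 ≤ ‖y‖ ^ 2 / (4 * τ ^ 2) + 1 / (2 * τ) := by positivity
  have hynn : 0 ≤ ‖y‖ / (2 * τ) := by positivity
  constructor
  · intro i
    simp only [hker', hsumeq]
    rw [gauss_fderiv_single]
    calc |(-(2 * τ)⁻¹) * (y i * gauss n τ c' y)|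
        ≤ ‖y‖ / (2 * τ) * gauss n τ c' y := by
          rw [abs_mul, abs_neg, abs_inv, abs_of_pos h2τ, abs_mul, abs_of_nonneg hg0,
            div_eq_mul_inv, mul_comm ‖y‖ (2 * τ)⁻¹, mul_assoc]
          gcongr
          · exact abs_coord_le_norm y i
      _ ≤ (‖y‖ ^ 2 / (4 * τ ^ 2) + 1 / (2 * τ) + ‖y‖ / (2 * τ)) * gauss n τ c' y := by
          apply mul_le_mul_of_nonneg_right _ hg0
          linarith
      _ ≤ 20 * (n:ℝ)^2 * ∑ ε : Fin n → Bool, gauss n τ c' (y + signPerturb n ε) := hkey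
  · intro i j
    simp only [hker', hsumeq]
    rw [gauss_fderiv2_single]
    set g := gauss n τ c' y with hgdef
    set d : ℝ := if j = i then 1 else 0 with hddef
    have hd0 : 0 ≤ d := by rw [hddef]; split <;> norm_num
    have hd1 : d ≤ 1 := by rw [hddef]; split <;> norm_num
    calc |(-(2 * τ)⁻¹) * (d * g + y j * (g * (-(2 * τ)⁻¹) * y i))|
        ≤ (2 * τ)⁻¹ * (1 * g + ‖y‖ * (g * (2 * τ)⁻¹ * ‖y‖)) := by
          rw [abs_mul, abs_neg, abs_inv, abs_of_pos h2τ]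
          gcongr (2 * τ)⁻¹ * ?_
          refine (abs_add_le _ _).trans (add_le_add ?_ ?_)
          · rw [abs_mul, abs_of_nonneg hg0]
            gcongr
            rw [abs_of_nonneg hd0]; exact hd1
          · rw [abs_mul, abs_mul, abs_mul, abs_neg, abs_inv, abs_of_pos h2τ,
              abs_of_nonneg hg0]
            gcongr
            · exact abs_coord_le_norm y j
            · exact abs_coord_le_norm y i
      _ = (1 / (2 * τ) + ‖y‖ ^ 2 / (4 * τ ^ 2)) * g := by field_simp; ring
      _ ≤ (‖y‖ ^ 2 / (4 * τ ^ 2) + 1 / (2 * τ) + ‖y‖ / (2 * τ)) * g := by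
          apply mul_le_mul_of_nonneg_right _ hg0
          linarith
      _ ≤ 20 * (n:ℝ)^2 * ∑ ε : Fin n → Bool, gauss n τ c' (y + signPerturb n ε) := hkey

end
end

section
/- Let n ≥ 1 be an integer and 0 < s < 1. There exists a constant C depending only on n and s such that for every τ > 0 and every y ∈ ℝⁿ with |y| ≥ 1, the time derivative of the fully fractional heat kernel satisfies |∂_τ G(y,τ)| ≤ C Σ_{ε∈{−1,1}ⁿ} G(y+η_ε, τ). -/
open MeasureTheory Metric Set

noncomputable section

set_option maxHeartbeats 1000000

/-- There exists `C = C(n,s)` such that for every `τ > 0` and every `y` with `|y| ≥ 1`,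
the time derivative of the fully fractional heat kernel satisfies
`|∂_τ G(y,τ)| ≤ C Σ_{ε ∈ {-1,1}ⁿ} G(y+η_ε,τ)`. -/
theorem kernel_time_derivative_estimate
    (n : ℕ) (hn : 1 ≤ n) (s : ℝ) (hs0 : 0 < s) (hs1 : s < 1) :
    ∃ C : ℝ, 0 < C ∧ ∀ τ : ℝ, 0 < τ → ∀ y : Euc n, 1 ≤ ‖y‖ →
      |deriv (fun t => fracHeatKernel n s y t) τ| ≤
        C * ∑ ε : Fin n → Bool, fracHeatKernel n s (y + signPerturb n ε) τ := by
  have hn0 : (0 : ℝ) < n := by exact_mod_cast hn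
  have ha : 0 < (n : ℝ) / 2 + 1 - s := by nlinarith
  set a : ℝ := (n : ℝ) / 2 + 1 - s with ha_def
  have hGam : Real.Gamma (-s) ≠ 0 := by
    apply Real.Gamma_ne_zero
    intro m
    cases m with
    | zero => simp; linarith
    | succ k =>
      have h1 : (1 : ℝ) ≤ (k + 1 : ℕ) := by exact_mod_cast Nat.succ_le_succ (Nat.zero_le k)
      intro h
      push_cast at h h1
      linarith
  have hK : 0 < (4 * Real.pi) ^ (-(n : ℝ) / 2) * |Real.Gamma (-s)|⁻¹ := by
    apply mul_pos
    · exact Real.rpow_pos_of_pos (by positivity) _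
    · exact inv_pos.mpr (abs_pos.mpr hGam)
  set K : ℝ := (4 * Real.pi) ^ (-(n : ℝ) / 2) * |Real.Gamma (-s)|⁻¹ with hK_def
  clear_value a K
  refine ⟨16 * n ^ 2 + 4 * n * a, by positivity, ?_⟩
  intro τ hτ y hy
  set r : ℝ := ‖y‖ with hr_def
  have hr0 : 0 < r := lt_of_lt_of_le one_pos hy
  set b : ℝ := r ^ 2 with hb_def
  have hb0 : 0 ≤ b := sq_nonneg r
  clear_value r b
  -- Step 1: compute the derivative
  have hDeriv : deriv (fun t => fracHeatKernel n s y t) τ =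
      K * τ ^ (-a) * Real.exp (-b / (4 * τ)) * (b / (4 * τ ^ 2) - a / τ) := by
    have h1 : HasDerivAt (fun t : ℝ => t ^ (-a)) (-a * τ ^ (-a - 1)) τ :=
      Real.hasDerivAt_rpow_const (Or.inl hτ.ne')
    have h2' := (hasDerivAt_inv hτ.ne').const_mul (-b / 4)
    have hfun : (fun t : ℝ => -b / (4 * t)) = fun t : ℝ => -b / 4 * t⁻¹ := by
      funext t
      by_cases ht : t = 0
      · simp [ht]
      · field_simp
    have hval : b / (4 * τ ^ 2) = -b / 4 * -(τ ^ 2)⁻¹ := by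
      field_simp
    have h2 : HasDerivAt (fun t : ℝ => -b / (4 * t)) (b / (4 * τ ^ 2)) τ := by
      rw [hfun, hval]; exact h2'
    have h3 : HasDerivAt (fun t : ℝ => Real.exp (-b / (4 * t)))
        (Real.exp (-b / (4 * τ)) * (b / (4 * τ ^ 2))) τ := h2.exp
    have h4 := (h1.const_mul K).mul h3
    have heq : (fun t => fracHeatKernel n s y t) =ᶠ[nhds τ]
        (fun t : ℝ => K * t ^ (-a) * Real.exp (-b / (4 * t))) := by
      filter_upwards [eventually_gt_nhds hτ] with t ht
      simp only [fracHeatKernel, if_pos ht, hK_def, ha_def, hb_def, hr_def]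
    rw [heq.deriv_eq, show deriv (fun t : ℝ => K * t ^ (-a) * Real.exp (-b / (4 * t))) τ = _ from h4.deriv]
    have hpow : τ ^ (-a - 1) = τ ^ (-a) / τ := by
      rw [show -a - 1 = -a - (1:ℝ) from rfl, Real.rpow_sub hτ, Real.rpow_one]
    rw [hpow]
    field_simp
    ring
  -- Step 2: choose the sign vector and estimate the shifted norm
  set ε₀ : Fin n → Bool := fun i => decide (y i < 0) with hε₀
  set η : Euc n := signPerturb n ε₀ with hη
  have hηi : ∀ i, η i = (1 / (n : ℝ)) * (if ε₀ i then 1 else -1) := fun i => rfl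
  have hadd : ∀ i, (y + η) i = y i + η i := fun i => rfl
  clear_value η
  have hsq : ∀ i, (y i + η i) ^ 2 = (y i) ^ 2 - 2 / n * |y i| + 1 / (n : ℝ) ^ 2 := by
    intro i
    rw [hηi]
    by_cases h : y i < 0
    · have hb : ε₀ i = true := by simp [hε₀, h]
      rw [hb, if_pos rfl, abs_of_neg h]
      field_simp
      ring
    · have hb : ε₀ i = false := by simp [hε₀, h]
      rw [hb, if_neg (by simp), abs_of_nonneg (not_lt.mp h)]
      field_simp
      ring
  have hnorm_sq : ∀ z : Euc n, ‖z‖ ^ 2 = ∑ i, (z i) ^ 2 := by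
    intro z
    rw [EuclideanSpace.norm_eq, Real.sq_sqrt (by positivity)]
    simp [Real.norm_eq_abs, sq_abs]
  have hl1 : r ≤ ∑ i, |y i| := by
    have h1 : ∑ i, (y i) ^ 2 ≤ (∑ i, |y i|) ^ 2 := by
      have := Finset.sum_sq_le_sq_sum_of_nonneg
        (f := fun i => |y i|) (s := Finset.univ) (fun i _ => abs_nonneg (y i))
      simpa [sq_abs] using this
    have h2 : r ^ 2 ≤ (∑ i, |y i|) ^ 2 := by rw [hr_def, hnorm_sq]; exact h1
    have h3 : (0:ℝ) ≤ ∑ i, |y i| := Finset.sum_nonneg fun i _ => abs_nonneg _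
    nlinarith
  have hshift : ‖y + η‖ ^ 2 ≤ b - r / n := by
    rw [hnorm_sq]
    have hsum : ∑ i, ((y + η) i) ^ 2
        = (∑ i, (y i) ^ 2) - (2 / n) * (∑ i, |y i|) + 1 / n := by
      have h1 : ∑ i, ((y + η) i) ^ 2
          = ∑ i, ((y i) ^ 2 - 2 / n * |y i| + 1 / (n : ℝ) ^ 2) := by
        refine Finset.sum_congr rfl fun i _ => ?_
        rw [hadd, hsq]
      rw [h1, Finset.sum_add_distrib, Finset.sum_sub_distrib, ← Finset.mul_sum,
        Finset.sum_const, Finset.card_univ, Fintype.card_fin, nsmul_eq_mul]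
      have hne : (n : ℝ) ≠ 0 := ne_of_gt hn0
      field_simp
    rw [hsum]
    have hb' : ∑ i, (y i) ^ 2 = b := by rw [hb_def, hr_def, hnorm_sq]
    rw [hb']
    have h1 : (2 / (n:ℝ)) * r ≤ (2 / n) * ∑ i, |y i| :=
      mul_le_mul_of_nonneg_left hl1 (by positivity)
    have h2 : (1:ℝ) / n ≤ r / n := by gcongr
    have h3 : (2 / (n:ℝ)) * r - r / n = r / n := by ring
    linarith
  -- Step 3: scalar inequality
  set v : ℝ := r / (4 * n * τ) with hv
  clear_value v
  have hv0 : 0 < v := by rw [hv]; positivity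
  have hrτ : r / τ = 4 * n * v := by rw [hv]; field_simp
  have h1τ : 1 / τ ≤ 4 * n * v := by
    rw [← hrτ]
    gcongr
  have hbτ : b / (4 * τ ^ 2) = 4 * n ^ 2 * v ^ 2 := by
    have h : b / (4 * τ ^ 2) = (r / τ) ^ 2 / 4 := by rw [hb_def]; field_simp
    rw [h, hrτ]; ring
  have hvexp : v ≤ Real.exp v := by linarith [Real.add_one_le_exp v]
  have hv2exp : v ^ 2 ≤ 4 * Real.exp v := by
    have h := Real.add_one_le_exp (v / 2)
    have hsq2 : Real.exp (v / 2) * Real.exp (v / 2) = Real.exp v := by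
      rw [← Real.exp_add]; ring_nf
    nlinarith [Real.exp_pos (v / 2)]
  have hscalar : b / (4 * τ ^ 2) + a / τ ≤ (16 * n ^ 2 + 4 * n * a) * Real.exp v := by
    have haτ : a / τ ≤ a * (4 * n * v) := by
      have h : a / τ = a * (1 / τ) := by ring
      rw [h]
      exact mul_le_mul_of_nonneg_left h1τ ha.le
    rw [hbτ]
    nlinarith [Real.exp_pos v,
      mul_le_mul_of_nonneg_left hvexp (by positivity : (0:ℝ) ≤ 4 * n * a),
      mul_le_mul_of_nonneg_left hv2exp (by positivity : (0:ℝ) ≤ 4 * (n:ℝ) ^ 2)]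
  -- Step 4: exponential comparison for the shifted kernel
  have hexp_cmp : Real.exp (-b / (4 * τ)) * Real.exp v ≤ Real.exp (-‖y + η‖ ^ 2 / (4 * τ)) := by
    rw [← Real.exp_add]
    apply Real.exp_le_exp.mpr
    have h : -b / (4 * τ) + v = -(b - r / n) / (4 * τ) := by
      rw [hv]; field_simp; ring
    rw [h]
    have h4τ : (0:ℝ) < 4 * τ := by positivity
    apply div_le_div_of_nonneg_right ?_ h4τ.le |>.trans_eq rfl
    · linarith [hshift]
  -- Step 5: assemble
  rw [hDeriv]
  have hpos : 0 ≤ K * τ ^ (-a) * Real.exp (-b / (4 * τ)) := by positivity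
  have habs : |K * τ ^ (-a) * Real.exp (-b / (4 * τ)) * (b / (4 * τ ^ 2) - a / τ)| ≤
      K * τ ^ (-a) * Real.exp (-b / (4 * τ)) * (b / (4 * τ ^ 2) + a / τ) := by
    rw [abs_mul, abs_of_nonneg hpos]
    apply mul_le_mul_of_nonneg_left _ hpos
    have h1 : 0 ≤ b / (4 * τ ^ 2) := by positivity
    have h2 : 0 ≤ a / τ := by positivity
    rw [abs_le]
    constructor
    · linarith
    · linarith
  refine habs.trans ?_
  have hterm : K * τ ^ (-a) * Real.exp (-b / (4 * τ)) * (b / (4 * τ ^ 2) + a / τ) ≤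
      (16 * n ^ 2 + 4 * n * a) * fracHeatKernel n s (y + η) τ := by
    have hG : fracHeatKernel n s (y + η) τ
        = K * τ ^ (-a) * Real.exp (-‖y + η‖ ^ 2 / (4 * τ)) := by
      simp only [fracHeatKernel, if_pos hτ, hK_def, ha_def]
    rw [hG]
    calc K * τ ^ (-a) * Real.exp (-b / (4 * τ)) * (b / (4 * τ ^ 2) + a / τ)
        ≤ K * τ ^ (-a) * Real.exp (-b / (4 * τ)) * ((16 * n ^ 2 + 4 * n * a) * Real.exp v) :=
          mul_le_mul_of_nonneg_left hscalar hpos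
      _ = (16 * n ^ 2 + 4 * n * a) * (K * τ ^ (-a) * (Real.exp (-b / (4 * τ)) * Real.exp v)) := by
          ring
      _ ≤ (16 * n ^ 2 + 4 * n * a) * (K * τ ^ (-a) * Real.exp (-‖y + η‖ ^ 2 / (4 * τ))) := by
          apply mul_le_mul_of_nonneg_left _ (by positivity)
          exact mul_le_mul_of_nonneg_left hexp_cmp (by positivity)
  refine hterm.trans ?_
  apply mul_le_mul_of_nonneg_left _ (by positivity)
  rw [hη]
  exact Finset.single_le_sum (f := fun ε => fracHeatKernel n s (y + signPerturb n ε) τ)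
    (fun ε _ => fracHeatKernel_nonneg n s _ τ) (Finset.mem_univ ε₀)

end
end

section
/- Let n ≥ 1 be an integer and let x, y ∈ ℝⁿ with |y−x| ≥ 1. Let ε ∈ {−1,1}ⁿ be a sign vector such that y−x lies in the closed orthant of ε, and set x' = x + η_ε. Then |y−x|² ≥ |y−x'|² + (1/n)|y−x|. -/
open MeasureTheory Metric Set

noncomputable section

/-- If `|y - x| ≥ 1` and `y - x` lies in the closed orthant of the sign vector `ε`
(i.e. `ε_i (y-x)_i ≥ 0` for all `i`), then with `x' = x + η_ε` one has
`|y - x|² ≥ |y - x'|² + (1/n)|y - x|`. -/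
theorem orthant_perturbation_inequality (n : ℕ) (hn : 1 ≤ n)
    (x y : Euc n) (hxy : 1 ≤ ‖y - x‖) (ε : Fin n → Bool)
    (horth : ∀ i : Fin n, 0 ≤ (if ε i then (1 : ℝ) else -1) * (y - x) i) :
    ‖y - (x + signPerturb n ε)‖ ^ 2 + (1 / (n : ℝ)) * ‖y - x‖ ≤ ‖y - x‖ ^ 2 := by
  have hnpos : (0 : ℝ) < n := by exact_mod_cast hn
  set z : Euc n := y - x with hz
  set η : Euc n := signPerturb n ε with hη
  have hηi : ∀ i, η i = (1 / (n : ℝ)) * (if ε i then 1 else -1) := fun i => rfl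
  have hrw : y - (x + η) = z - η := by rw [hz]; abel
  -- norm of η squared
  have hηsq : ‖η‖ ^ 2 = 1 / (n : ℝ) := by
    rw [EuclideanSpace.norm_eq, Real.sq_sqrt (Finset.sum_nonneg fun i _ => sq_nonneg _)]
    have h1 : ∀ i : Fin n, ‖η i‖ ^ 2 = 1 / (n : ℝ) ^ 2 := by
      intro i
      rw [hηi, Real.norm_eq_abs]
      rcases Bool.eq_false_or_eq_true (ε i) with h | h <;>
        simp [h, abs_mul, abs_of_nonneg (by positivity : (0:ℝ) ≤ 1 / n)] <;> ring
    rw [Finset.sum_congr rfl fun i _ => h1 i, Finset.sum_const, Finset.card_univ,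
      Fintype.card_fin, nsmul_eq_mul]
    field_simp
  -- ℓ¹ ≥ ℓ²
  have hl1 : ‖z‖ ≤ ∑ i, |z i| := by
    have hsn : (0:ℝ) ≤ ∑ i, |z i| := Finset.sum_nonneg fun i _ => abs_nonneg _
    have h1 : ‖z‖ ^ 2 ≤ (∑ i, |z i|) ^ 2 := by
      rw [EuclideanSpace.norm_eq, Real.sq_sqrt (Finset.sum_nonneg fun i _ => sq_nonneg _)]
      calc ∑ i, ‖z i‖ ^ 2 = ∑ i, |z i| ^ 2 := by simp [Real.norm_eq_abs]
        _ ≤ (∑ i, |z i|) ^ 2 := Finset.sum_sq_le_sq_sum_of_nonneg (fun i _ => abs_nonneg _)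
    nlinarith [norm_nonneg z]
  -- inner product bound
  have hinner : (1 / (n : ℝ)) * ‖z‖ ≤ (inner ℝ z η : ℝ) := by
    have : (inner ℝ z η : ℝ) = (1 / (n : ℝ)) * ∑ i, |z i| := by
      rw [PiLp.inner_apply]
      simp only [RCLike.inner_apply, conj_trivial, hηi]
      rw [Finset.mul_sum]
      refine Finset.sum_congr rfl fun i _ => ?_
      have h0 := horth i
      have habs : (if ε i then (1:ℝ) else -1) * z i = |z i| := by
        cases h : ε i with
        | false =>
          simp only [h, Bool.false_eq_true, if_false] at h0 ⊢
          rw [abs_of_nonpos (by linarith)]; ring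
        | true =>
          simp only [h, if_true] at h0 ⊢
          rw [abs_of_nonneg (by linarith : (0:ℝ) ≤ z i)]; ring
      rw [← habs]; ring
    rw [this]
    have := mul_le_mul_of_nonneg_left hl1 (by positivity : (0:ℝ) ≤ 1 / n)
    linarith
  have hexp : ‖z - η‖ ^ 2 = ‖z‖ ^ 2 - 2 * (inner ℝ z η : ℝ) + ‖η‖ ^ 2 := norm_sub_sq_real z η
  rw [hrw, hexp, hηsq]
  have h2 : 1 / (n : ℝ) ≤ (1 / (n : ℝ)) * ‖z‖ := by
    nlinarith [hxy]
  linarith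

end
end

section
/- For every integer n ≥ 1 and every p > 0 there exists a constant C depending only on n and p with the following property: whenever x, y ∈ ℝⁿ satisfy |y−x| ≥ 1, ε ∈ {−1,1}ⁿ is a sign vector such that y−x lies in the closed orthant of ε, and h > 0, one has (|y−x|/h)^p · exp(−|y−x|²/(4h)) ≤ C · exp(−|y−(x+η_ε)|²/(4h)). -/
open MeasureTheory Metric Set

noncomputable section

lemma rpow_le_const_mul_exp (p a : ℝ) (hp : 0 < p) (ha : 0 < a) :
    ∃ C : ℝ, 0 < C ∧ ∀ t : ℝ, 0 < t → t ^ p ≤ C * Real.exp (a * t) := by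
  refine ⟨Real.exp (-p - p * Real.log (a / p)), Real.exp_pos _, fun t ht => ?_⟩
  rw [Real.rpow_def_of_pos ht, ← Real.exp_add]
  apply Real.exp_le_exp.mpr
  have h1 : Real.log t = Real.log (a * t / p) - Real.log (a / p) := by
    rw [← Real.log_div (by positivity) (by positivity)]
    congr 1
    field_simp
  have h2 : Real.log (a * t / p) ≤ a * t / p - 1 :=
    Real.log_le_sub_one_of_pos (by positivity)
  have h3 : p * (a * t / p) = a * t := by field_simp
  rw [h1]
  nlinarith [mul_le_mul_of_nonneg_left h2 hp.le]

/-- For every `n ≥ 1` and `p > 0` there is `C = C(n,p)` such that whenever `|y-x| ≥ 1`,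
`y - x` lies in the closed orthant of the sign vector `ε`, and `h > 0`, one has
`(|y-x|/h)^p exp(-|y-x|²/(4h)) ≤ C exp(-|y-(x+η_ε)|²/(4h))`. -/
theorem directional_perturbation_power_estimate (n : ℕ) (hn : 1 ≤ n) (p : ℝ) (hp : 0 < p) :
    ∃ C : ℝ, 0 < C ∧ ∀ x y : Euc n, 1 ≤ ‖y - x‖ →
      ∀ ε : Fin n → Bool, (∀ i : Fin n, 0 ≤ (if ε i then (1 : ℝ) else -1) * (y - x) i) →
      ∀ h : ℝ, 0 < h →
        (‖y - x‖ / h) ^ p * Real.exp (-‖y - x‖ ^ 2 / (4 * h)) ≤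
          C * Real.exp (-‖y - (x + signPerturb n ε)‖ ^ 2 / (4 * h)) := by
  have hn0 : (0:ℝ) < n := by exact_mod_cast hn
  obtain ⟨C, hC, hCle⟩ := rpow_le_const_mul_exp p (1/(4*n)) hp (by positivity)
  refine ⟨C, hC, ?_⟩
  intro x y hr ε hε h hh
  set v : Euc n := y - x with hv
  set η : Euc n := signPerturb n ε with hη
  have hηi : ∀ i, η i = (1/(n:ℝ)) * (if ε i then 1 else -1) := fun i => rfl
  -- inner product bound
  have hinner : ‖v‖ / n ≤ (inner ℝ v η : ℝ) := by
    have h1 : (inner ℝ v η : ℝ) = (1/(n:ℝ)) * ∑ i, (if ε i then (1:ℝ) else -1) * v i := by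
      rw [PiLp.inner_apply, Finset.mul_sum]
      refine Finset.sum_congr rfl fun i _ => ?_
      simp [hηi i, RCLike.inner_apply]
    have h2 : ∀ i, |v i| = (if ε i then (1:ℝ) else -1) * v i := by
      intro i
      have := hε i
      by_cases hi : ε i <;> simp [hi] at this ⊢ <;> cases abs_cases (v i) <;> linarith
    have h3 : ‖v‖ ≤ ∑ i, |v i| := by
      rw [EuclideanSpace.norm_eq]
      have : ∑ i : Fin n, ‖v i‖ ^ 2 ≤ (∑ i, |v i|) ^ 2 := by
        simp only [Real.norm_eq_abs]
        exact Finset.sum_sq_le_sq_sum_of_nonneg fun i _ => abs_nonneg _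
      calc √(∑ i : Fin n, ‖v i‖ ^ 2) ≤ √((∑ i, |v i|) ^ 2) := Real.sqrt_le_sqrt this
        _ = ∑ i, |v i| := Real.sqrt_sq (by positivity)
    rw [h1]
    rw [div_le_iff₀ hn0] at *
    calc ‖v‖ ≤ ∑ i, |v i| := h3
      _ = ∑ i, (if ε i then (1:ℝ) else -1) * v i := Finset.sum_congr rfl fun i _ => h2 i
      _ = (1/(n:ℝ)) * (∑ i, (if ε i then (1:ℝ) else -1) * v i) * n := by field_simp
  -- norm of η
  have hηnorm : ‖η‖ ^ 2 = 1 / n := by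
    rw [EuclideanSpace.norm_eq, Real.sq_sqrt (by positivity)]
    have : ∀ i : Fin n, ‖η i‖ ^ 2 = 1 / (n:ℝ)^2 := by
      intro i
      rw [hηi i, Real.norm_eq_abs]
      by_cases hi : ε i <;> simp [hi, abs_mul] <;> rw [abs_of_nonneg (by positivity)] <;> ring
    rw [Finset.sum_congr rfl fun i _ => this i]
    simp
    field_simp
  -- key geometric estimate
  have hkey : ‖y - (x + η)‖ ^ 2 ≤ ‖v‖ ^ 2 - ‖v‖ / n := by
    have heq : y - (x + η) = v - η := by rw [hv]; abel
    rw [heq, norm_sub_sq_real, hηnorm]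
    have h1n : 1 / (n:ℝ) ≤ ‖v‖ / n := by
      gcongr
    nlinarith [hinner]
  -- assemble
  have hexp : Real.exp ((1/(4*(n:ℝ))) * (‖v‖/h)) * Real.exp (-‖v‖ ^ 2 / (4 * h)) ≤
      Real.exp (-‖y - (x + η)‖ ^ 2 / (4 * h)) := by
    rw [← Real.exp_add]
    apply Real.exp_le_exp.mpr
    have expand : 1/(4*(n:ℝ)) * (‖v‖/h) = (‖v‖/n) / (4*h) := by rw [div_div, div_mul_div_comm, one_mul]; ring_nf
    rw [expand, ← add_div, div_le_div_iff_of_pos_right (by positivity)]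
    linarith [hkey]
  calc (‖v‖ / h) ^ p * Real.exp (-‖v‖ ^ 2 / (4 * h))
      ≤ (C * Real.exp ((1/(4*(n:ℝ))) * (‖v‖/h))) * Real.exp (-‖v‖ ^ 2 / (4 * h)) := by
        apply mul_le_mul_of_nonneg_right (hCle _ (by positivity)) (Real.exp_nonneg _)
    _ = C * (Real.exp ((1/(4*(n:ℝ))) * (‖v‖/h)) * Real.exp (-‖v‖ ^ 2 / (4 * h))) := by ring
    _ ≤ C * Real.exp (-‖y - (x + η)‖ ^ 2 / (4 * h)) := by
        exact mul_le_mul_of_nonneg_left hexp hC.le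

end
end

section
/- Let n ≥ 2 be an integer and 0 < s < 1, and let f and v be as in the homogeneous-part setting. Then there exists a constant C depending only on n and s such that for every x ∈ B₁(0) and all t, t̄ ∈ (1,2), |v(x,t) − v(x,t̄)| ≤ C · ‖v‖_{L∞(Q)} · |t − t̄|; in particular, for every α ∈ (0,1), t ↦ v(x,t) is α-Hölder continuous on (1,2) with Hölder constant at most C·‖v‖_{L∞(Q)}. -/
open MeasureTheory Metric Set

noncomputable section

/-! ### Auxiliary lemmas for the time-regularity estimate -/

set_option maxHeartbeats 1000000

lemma HPpow_le_pow_mul_exp (m : ℕ) (u : ℝ) (hu : 0 ≤ u) : u ^ m ≤ (m:ℝ)^m * Real.exp u := by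
  rcases Nat.eq_zero_or_pos m with h | h
  · subst h; simpa using Real.one_le_exp hu
  · have hm : (0:ℝ) < m := by exact_mod_cast h
    have h1 : u / m ≤ Real.exp (u/m) := by linarith [Real.add_one_le_exp (u/m)]
    have h2 : (u/m)^m ≤ (Real.exp (u/m))^m :=
      pow_le_pow_left₀ (div_nonneg hu hm.le) h1 m
    rw [div_pow, ← Real.exp_nat_mul] at h2
    have : (m:ℝ) * (u/m) = u := by field_simp
    rw [this] at h2
    calc u ^ m = (m:ℝ)^m * (u^m / (m:ℝ)^m) := by field_simp
    _ ≤ (m:ℝ)^m * Real.exp u := by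
        apply mul_le_mul_of_nonneg_left h2 (by positivity)

lemma HPrpow_inv_exp_bound (m : ℕ) (r K σ : ℝ) (hrm : r ≤ m) (hK : 0 < K)
    (h0 : 0 < σ) (h1 : σ ≤ 1) : σ ^ (-r) * Real.exp (-(1/(K*σ))) ≤ (K * m)^m := by
  set u : ℝ := 1/(K*σ) with hu
  have hu0 : 0 < u := by positivity
  have hinv : σ⁻¹ = K * u := by
    rw [hu]; field_simp
  have hσr : σ ^ (-r) ≤ (σ⁻¹) ^ (m:ℝ) := by
    rw [Real.rpow_neg h0.le, ← Real.inv_rpow h0.le]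
    exact Real.rpow_le_rpow_of_exponent_le (one_le_inv_iff₀.mpr ⟨h0, h1⟩) hrm
  have hm : (σ⁻¹) ^ (m:ℝ) = (K*u)^m := by rw [Real.rpow_natCast, hinv]
  have hum : (K*u)^m ≤ K^m * ((m:ℝ)^m * Real.exp u) := by
    rw [mul_pow]
    exact mul_le_mul_of_nonneg_left (HPpow_le_pow_mul_exp m u hu0.le) (by positivity)
  calc σ ^ (-r) * Real.exp (-u) ≤ (K^m * ((m:ℝ)^m * Real.exp u)) * Real.exp (-u) := by
        apply mul_le_mul_of_nonneg_right _ (Real.exp_nonneg _)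
        calc σ ^ (-r) ≤ (σ⁻¹) ^ (m:ℝ) := hσr
        _ = (K*u)^m := hm
        _ ≤ _ := hum
  _ = (K*m)^m := by
        rw [mul_pow, mul_assoc, mul_assoc, ← Real.exp_add, add_neg_cancel, Real.exp_zero, mul_one]

lemma HPmul_exp_neg_le (b c e : ℝ) (hb : 0 ≤ b) (hc : 0 < c) (h : b/c ≤ e) :
    b * Real.exp (-e) ≤ c := by
  have hw : 0 ≤ b/c := div_nonneg hb hc.le
  have h1 : Real.exp (-e) ≤ Real.exp (-(b/c)) := Real.exp_le_exp.mpr (by linarith)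
  have h2 : (b/c) * Real.exp (-(b/c)) ≤ 1 := by
    rw [Real.exp_neg, ← div_eq_mul_inv, div_le_one (Real.exp_pos _)]
    linarith [Real.add_one_le_exp (b/c)]
  calc b * Real.exp (-e) ≤ b * Real.exp (-(b/c)) := mul_le_mul_of_nonneg_left h1 hb
  _ = c * ((b/c) * Real.exp (-(b/c))) := by field_simp
  _ ≤ c * 1 := mul_le_mul_of_nonneg_left h2 hc.le
  _ = c := mul_one c

/-- the time profile of the kernel -/
def HPkern (a b σ : ℝ) : ℝ := if 0 < σ then σ ^ (-a) * Real.exp (-b/σ) else 0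

/-- constant for the derivative estimate -/
def HPCd (a : ℝ) (m : ℕ) : ℝ := (5/2:ℝ)^a * ((a+5) + (a+10)*(40*(m:ℝ))^m)

/-- constant for the jump estimate -/
def HPCb (a : ℝ) (m : ℕ) : ℝ := (5/2:ℝ)^a * (20*(m:ℝ))^m

lemma HPkern_nonneg (a b σ : ℝ) : 0 ≤ HPkern a b σ := by
  unfold HPkern; split
  · positivity
  · exact le_refl 0

lemma HPkern_pos_eq (a b σ : ℝ) (h : 0 < σ) :
    HPkern a b σ = σ ^ (-a) * Real.exp (-b/σ) := if_pos h

lemma HPkern_nonpos_eq (a b σ : ℝ) (h : ¬ 0 < σ) : HPkern a b σ = 0 := if_neg h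

lemma HPkern_hasDerivAt (a b σ : ℝ) (hσ : 0 < σ) :
    HasDerivAt (HPkern a b) ((b/σ^2 - a/σ) * (σ ^ (-a) * Real.exp (-b/σ))) σ := by
  have hEq : HPkern a b =ᶠ[nhds σ] fun x => x ^ (-a) * Real.exp (-b * x⁻¹) := by
    filter_upwards [eventually_gt_nhds hσ] with x hx
    rw [HPkern_pos_eq a b x hx, div_eq_mul_inv]
  have h1 : HasDerivAt (fun x : ℝ => x ^ (-a)) ((-a) * σ ^ (-a - 1)) σ :=
    Real.hasDerivAt_rpow_const (Or.inl hσ.ne')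
  have h2 : HasDerivAt (fun x : ℝ => -b * x⁻¹) (-b * -(σ^2)⁻¹) σ :=
    (hasDerivAt_inv hσ.ne').const_mul (-b)
  have h3 := h2.exp
  have h := h1.mul h3
  have h' := h.congr_of_eventuallyEq hEq
  refine h'.congr_deriv ?_
  rw [show -a - 1 = -a - 1 from rfl, Real.rpow_sub_one hσ.ne' (-a)]
  rw [show -b * σ⁻¹ = -b/σ by ring]
  field_simp
  ring

lemma HPCd_nonneg (a : ℝ) (m : ℕ) (ha1 : 1 ≤ a) : 0 ≤ HPCd a m := by
  unfold HPCd
  apply mul_nonneg (le_of_lt (Real.rpow_pos_of_pos (by norm_num) a))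
  have : (0:ℝ) ≤ (a+10)*(40*(m:ℝ))^m := mul_nonneg (by linarith) (by positivity)
  linarith

lemma HPCb_nonneg (a : ℝ) (m : ℕ) : 0 ≤ HPCb a m := by
  unfold HPCb
  exact mul_nonneg (le_of_lt (Real.rpow_pos_of_pos (by norm_num) a)) (by positivity)

lemma HPestD (a b ξ σ₀ : ℝ) (m : ℕ) (ha1 : 1 ≤ a) (ham : a + 2 ≤ (m:ℝ)) (hb : 0 ≤ b)
    (hξ : 0 < ξ) (h1 : ξ + 1/2 ≤ σ₀) (h2 : σ₀ ≤ ξ + 3/2) (hside : 1 ≤ ξ ∨ 1/4 ≤ b) :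
    (b/ξ^2 + a/ξ) * (ξ ^ (-a) * Real.exp (-b/ξ)) ≤
      HPCd a m * (σ₀ ^ (-a) * Real.exp (-b/σ₀)) := by
  have ha0 : 0 ≤ a := by linarith
  have hσ₀ : 0 < σ₀ := by linarith
  have hξσ : ξ ≤ σ₀ := by linarith
  set d := b/ξ - b/σ₀ with hd
  have hd0 : 0 ≤ d := by
    have : b/σ₀ ≤ b/ξ := by gcongr
    simpa [hd] using this
  have hdform : d = b * (σ₀ - ξ) / (ξ * σ₀) := by rw [hd]; field_simp
  have key : (b/ξ^2 + a/ξ) * (σ₀/ξ)^a * Real.exp (-d) ≤ HPCd a m := by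
    have hCd2 : 0 ≤ (5/2:ℝ)^a * ((a+10)*(40*(m:ℝ))^m) := by
      apply mul_nonneg (le_of_lt (Real.rpow_pos_of_pos (by norm_num) a))
      exact mul_nonneg (by linarith) (by positivity)
    have hCd1 : 0 ≤ (5/2:ℝ)^a * (a+5) := by
      exact mul_nonneg (le_of_lt (Real.rpow_pos_of_pos (by norm_num) a)) (by linarith)
    rcases le_or_gt 1 ξ with hξ1 | hξ1
    · -- ξ ≥ 1
      have hR : (σ₀/ξ)^a ≤ (5/2:ℝ)^a := by
        apply Real.rpow_le_rpow (by positivity) _ ha0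
        rw [div_le_iff₀ hξ]; nlinarith
      have hE1 : Real.exp (-d) ≤ 1 := Real.exp_le_one_iff.mpr (by linarith)
      have hu : b/(2*(ξ*σ₀)) ≤ d := by
        rw [hdform, div_le_div_iff₀ (by positivity) (by positivity)]
        nlinarith [mul_nonneg (mul_nonneg hb (by linarith : (0:ℝ) ≤ 2*(σ₀-ξ)-1))
          (by positivity : (0:ℝ) ≤ ξ*σ₀)]
      have hbE : b * Real.exp (-d) ≤ 2*(ξ*σ₀) := HPmul_exp_neg_le b _ d hb (by positivity) hu
      have t1 : (a/ξ) * Real.exp (-d) ≤ a := by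
        calc (a/ξ) * Real.exp (-d) ≤ (a/ξ) * 1 :=
              mul_le_mul_of_nonneg_left hE1 (div_nonneg ha0 hξ.le)
        _ = a/ξ := mul_one _
        _ ≤ a := by rw [div_le_iff₀ hξ]; nlinarith
      have t2 : (b/ξ^2) * Real.exp (-d) ≤ 5 := by
        have e : (b/ξ^2) * Real.exp (-d) = (b * Real.exp (-d))/ξ^2 := by ring
        rw [e, div_le_iff₀ (by positivity)]
        calc b * Real.exp (-d) ≤ 2*(ξ*σ₀) := hbE
        _ ≤ 5*ξ^2 := by nlinarith
      have hPE : (b/ξ^2 + a/ξ) * Real.exp (-d) ≤ a + 5 := by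
        have e : (b/ξ^2 + a/ξ) * Real.exp (-d)
            = (b/ξ^2) * Real.exp (-d) + (a/ξ) * Real.exp (-d) := by ring
        rw [e]; linarith
      have hP0 : 0 ≤ (b/ξ^2 + a/ξ) * Real.exp (-d) :=
        mul_nonneg (add_nonneg (by positivity) (div_nonneg ha0 hξ.le)) (Real.exp_nonneg _)
      calc (b/ξ^2 + a/ξ) * (σ₀/ξ)^a * Real.exp (-d)
          = ((b/ξ^2 + a/ξ) * Real.exp (-d)) * (σ₀/ξ)^a := by ring
      _ ≤ (a+5) * (5/2:ℝ)^a := mul_le_mul hPE hR (by positivity) (by linarith)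
      _ ≤ HPCd a m := by unfold HPCd; nlinarith [hCd2]
    · -- ξ < 1, so b ≥ 1/4
      have hbq : 1/4 ≤ b := by
        rcases hside with h | h
        · linarith
        · exact h
      have hσ₀5 : σ₀ ≤ 5/2 := by linarith
      have hR : (σ₀/ξ)^a ≤ (5/2:ℝ)^a * ξ^(-a) := by
        have hmono : σ₀/ξ ≤ (5/2)/ξ := by gcongr
        calc (σ₀/ξ)^a ≤ ((5/2)/ξ)^a := Real.rpow_le_rpow (by positivity) hmono ha0
        _ = (5/2:ℝ)^a * ξ^(-a) := by
            rw [Real.div_rpow (by norm_num) hξ.le, Real.rpow_neg hξ.le, div_eq_mul_inv]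
      have hP : b/ξ^2 + a/ξ ≤ (a+b)/ξ^2 := by
        have h' : a/ξ ≤ a/ξ^2 := by
          rw [div_le_div_iff₀ hξ (by positivity)]
          nlinarith [mul_nonneg ha0 hξ.le]
        have e : (a+b)/ξ^2 = a/ξ^2 + b/ξ^2 := by ring
        linarith
      have hu : b/(5*ξ) ≤ d := by
        rw [hdform, div_le_div_iff₀ (by positivity) (by positivity)]
        nlinarith [mul_nonneg (mul_nonneg hb hξ.le) (by linarith : (0:ℝ) ≤ 5*(σ₀-ξ)-σ₀)]
      have hw : b/(10*ξ) ≤ d/2 := by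
        have e : b/(10*ξ) = (b/(5*ξ))/2 := by ring
        linarith
      have hq : 1/(40*ξ) ≤ d/2 := by
        have h' : (1:ℝ)/(40*ξ) ≤ b/(10*ξ) := by
          rw [div_le_div_iff₀ (by positivity) (by positivity)]; nlinarith
        linarith
      have hd20 : 0 ≤ d/2 := div_nonneg hd0 (by norm_num)
      have hbE : b * Real.exp (-(d/2)) ≤ 10*ξ :=
        HPmul_exp_neg_le b _ _ hb (by positivity) hw
      have hA : (a+b) * Real.exp (-(d/2)) ≤ a + 10 := by
        have hE1 : Real.exp (-(d/2)) ≤ 1 := Real.exp_le_one_iff.mpr (by linarith)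
        have e : (a+b) * Real.exp (-(d/2))
            = a * Real.exp (-(d/2)) + b * Real.exp (-(d/2)) := by ring
        rw [e]
        have : a * Real.exp (-(d/2)) ≤ a := by
          calc a * Real.exp (-(d/2)) ≤ a * 1 := mul_le_mul_of_nonneg_left hE1 ha0
          _ = a := mul_one _
        linarith
      have htail : ξ^(-a)/ξ^2 * Real.exp (-(d/2)) ≤ (40*(m:ℝ))^m := by
        have e1 : ξ^(-a)/ξ^2 = ξ^(-(a+2)) := by
          rw [show -(a+2) = -a - (2:ℝ) by ring, Real.rpow_sub hξ]
          norm_num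
        have e2 : Real.exp (-(d/2)) ≤ Real.exp (-(1/(40*ξ))) :=
          Real.exp_le_exp.mpr (by linarith)
        calc ξ^(-a)/ξ^2 * Real.exp (-(d/2)) ≤ ξ^(-(a+2)) * Real.exp (-(1/(40*ξ))) := by
              rw [e1]
              exact mul_le_mul_of_nonneg_left e2 (le_of_lt (Real.rpow_pos_of_pos hξ _))
        _ ≤ (40*(m:ℝ))^m := HPrpow_inv_exp_bound m (a+2) 40 ξ ham (by norm_num) hξ hξ1.le
      have hsplitexp : Real.exp (-d) = Real.exp (-(d/2)) * Real.exp (-(d/2)) := by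
        rw [← Real.exp_add]; ring_nf
      have hE0 : (0:ℝ) ≤ Real.exp (-d) := Real.exp_nonneg _
      have hP0 : 0 ≤ b/ξ^2 + a/ξ :=
        add_nonneg (by positivity) (div_nonneg ha0 hξ.le)
      calc (b/ξ^2 + a/ξ) * (σ₀/ξ)^a * Real.exp (-d)
          ≤ ((a+b)/ξ^2) * ((5/2:ℝ)^a * ξ^(-a)) * Real.exp (-d) := by
            apply mul_le_mul_of_nonneg_right _ hE0
            apply mul_le_mul hP hR (by positivity) (by positivity)
      _ = (5/2:ℝ)^a * ((a+b) * Real.exp (-(d/2))) * (ξ^(-a)/ξ^2 * Real.exp (-(d/2))) := by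
            rw [hsplitexp]; ring
      _ ≤ (5/2:ℝ)^a * (a+10) * (40*(m:ℝ))^m := by
            apply mul_le_mul _ htail _ _
            · exact mul_le_mul_of_nonneg_left hA (le_of_lt (Real.rpow_pos_of_pos (by norm_num) a))
            · positivity
            · apply mul_nonneg (le_of_lt (Real.rpow_pos_of_pos (by norm_num) a)); linarith
      _ ≤ HPCd a m := by unfold HPCd; nlinarith [hCd1]
  have hexp : Real.exp (-b/ξ) = Real.exp (-d) * Real.exp (-b/σ₀) := by
    rw [← Real.exp_add]; congr 1; rw [hd]; ring
  have hpow : ξ ^ (-a) = (σ₀/ξ)^a * σ₀^(-a) := by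
    have h1' : σ₀^a ≠ 0 := ne_of_gt (Real.rpow_pos_of_pos hσ₀ a)
    have h2' : ξ^a ≠ 0 := ne_of_gt (Real.rpow_pos_of_pos hξ a)
    rw [Real.div_rpow hσ₀.le hξ.le, Real.rpow_neg hσ₀.le, Real.rpow_neg hξ.le]
    field_simp
  calc (b/ξ^2 + a/ξ) * (ξ ^ (-a) * Real.exp (-b/ξ))
      = ((b/ξ^2 + a/ξ) * (σ₀/ξ)^a * Real.exp (-d)) * (σ₀ ^ (-a) * Real.exp (-b/σ₀)) := by
        rw [hpow, hexp]; ring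
  _ ≤ HPCd a m * (σ₀ ^ (-a) * Real.exp (-b/σ₀)) := by
        apply mul_le_mul_of_nonneg_right key (by positivity)

lemma HPestB (a b σ σ₀ : ℝ) (m : ℕ) (ha1 : 1 ≤ a) (ham : a + 1 ≤ (m:ℝ)) (hm : 1 ≤ m)
    (hb : 1/4 ≤ b) (hσ : 0 < σ) (h1 : σ + 1/2 ≤ σ₀) (h2 : σ₀ ≤ σ + 3/2) :
    σ ^ (-a) * Real.exp (-b/σ) ≤ HPCb a m * (σ * (σ₀ ^ (-a) * Real.exp (-b/σ₀))) := by
  have ha0 : 0 ≤ a := by linarith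
  have hb0 : 0 ≤ b := by linarith
  have hσ₀ : 0 < σ₀ := by linarith
  have hσσ : σ ≤ σ₀ := by linarith
  have hm1 : (1:ℝ) ≤ (20*(m:ℝ))^m := by
    apply one_le_pow₀
    have : (1:ℝ) ≤ (m:ℝ) := by exact_mod_cast hm
    linarith
  set d := b/σ - b/σ₀ with hd
  have hd0 : 0 ≤ d := by
    have : b/σ₀ ≤ b/σ := by gcongr
    simpa [hd] using this
  have hdform : d = b * (σ₀ - σ) / (σ * σ₀) := by rw [hd]; field_simp
  have key : (σ₀/σ)^a * Real.exp (-d) ≤ HPCb a m * σ := by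
    rcases le_or_gt 1 σ with hσ1 | hσ1
    · have hR : (σ₀/σ)^a ≤ (5/2:ℝ)^a := by
        apply Real.rpow_le_rpow (by positivity) _ ha0
        rw [div_le_iff₀ hσ]; nlinarith
      have hE1 : Real.exp (-d) ≤ 1 := Real.exp_le_one_iff.mpr (by linarith)
      have hp : (0:ℝ) < (5/2:ℝ)^a := Real.rpow_pos_of_pos (by norm_num) a
      calc (σ₀/σ)^a * Real.exp (-d) ≤ (5/2:ℝ)^a * 1 :=
            mul_le_mul hR hE1 (Real.exp_nonneg _) hp.le
      _ = (5/2:ℝ)^a := mul_one _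
      _ = ((5/2:ℝ)^a * 1) * 1 := by ring
      _ ≤ ((5/2:ℝ)^a * (20*(m:ℝ))^m) * σ :=
          mul_le_mul (mul_le_mul_of_nonneg_left hm1 hp.le) hσ1 (by norm_num) (by positivity)
      _ = HPCb a m * σ := by unfold HPCb; ring
    · -- σ < 1
      have hσ₀5 : σ₀ ≤ 5/2 := by linarith
      have hR : (σ₀/σ)^a ≤ (5/2:ℝ)^a * σ^(-a) := by
        have hmono : σ₀/σ ≤ (5/2)/σ := by gcongr
        calc (σ₀/σ)^a ≤ ((5/2)/σ)^a := Real.rpow_le_rpow (by positivity) hmono ha0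
        _ = (5/2:ℝ)^a * σ^(-a) := by
            rw [Real.div_rpow (by norm_num) hσ.le, Real.rpow_neg hσ.le, div_eq_mul_inv]
      have hu : b/(5*σ) ≤ d := by
        rw [hdform, div_le_div_iff₀ (by positivity) (by positivity)]
        nlinarith [mul_nonneg (mul_nonneg hb0 hσ.le) (by linarith : (0:ℝ) ≤ 5*(σ₀-σ)-σ₀)]
      have hq : 1/(20*σ) ≤ d := by
        have h' : (1:ℝ)/(20*σ) ≤ b/(5*σ) := by
          rw [div_le_div_iff₀ (by positivity) (by positivity)]; nlinarith
        linarith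
      have htail : σ^(-a) * Real.exp (-d) ≤ σ * (20*(m:ℝ))^m := by
        have e1 : σ^(-a) = σ * σ^(-(a+1)) := by
          rw [show -(a+1) = -a - (1:ℝ) by ring, Real.rpow_sub hσ, Real.rpow_one]
          field_simp
        have e2 : Real.exp (-d) ≤ Real.exp (-(1/(20*σ))) := Real.exp_le_exp.mpr (by linarith)
        calc σ^(-a) * Real.exp (-d) ≤ σ * (σ^(-(a+1)) * Real.exp (-(1/(20*σ)))) := by
              rw [e1, mul_assoc]
              apply mul_le_mul_of_nonneg_left _ hσ.le
              exact mul_le_mul_of_nonneg_left e2 (le_of_lt (Real.rpow_pos_of_pos hσ _))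
        _ ≤ σ * (20*(m:ℝ))^m := by
              apply mul_le_mul_of_nonneg_left _ hσ.le
              exact HPrpow_inv_exp_bound m (a+1) 20 σ ham (by norm_num) hσ hσ1.le
      calc (σ₀/σ)^a * Real.exp (-d) ≤ ((5/2:ℝ)^a * σ^(-a)) * Real.exp (-d) :=
            mul_le_mul_of_nonneg_right hR (Real.exp_nonneg _)
      _ = (5/2:ℝ)^a * (σ^(-a) * Real.exp (-d)) := by ring
      _ ≤ (5/2:ℝ)^a * (σ * (20*(m:ℝ))^m) := by
            apply mul_le_mul_of_nonneg_left htail (le_of_lt (Real.rpow_pos_of_pos (by norm_num) a))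
      _ = HPCb a m * σ := by unfold HPCb; ring
  have hexp : Real.exp (-b/σ) = Real.exp (-d) * Real.exp (-b/σ₀) := by
    rw [← Real.exp_add]; congr 1; rw [hd]; ring
  have hpow : σ ^ (-a) = (σ₀/σ)^a * σ₀^(-a) := by
    have h1' : σ₀^a ≠ 0 := ne_of_gt (Real.rpow_pos_of_pos hσ₀ a)
    have h2' : σ^a ≠ 0 := ne_of_gt (Real.rpow_pos_of_pos hσ a)
    rw [Real.div_rpow hσ₀.le hσ.le, Real.rpow_neg hσ₀.le, Real.rpow_neg hσ.le]
    field_simp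
  calc σ ^ (-a) * Real.exp (-b/σ)
      = ((σ₀/σ)^a * Real.exp (-d)) * (σ₀ ^ (-a) * Real.exp (-b/σ₀)) := by
        rw [hpow, hexp]; ring
  _ ≤ (HPCb a m * σ) * (σ₀ ^ (-a) * Real.exp (-b/σ₀)) := by
        apply mul_le_mul_of_nonneg_right key (by positivity)
  _ = HPCb a m * (σ * (σ₀ ^ (-a) * Real.exp (-b/σ₀))) := by ring

/-- master estimate, asymmetric version (σ' ≤ σ) -/
lemma HPmaster_aux (a b σ' σ σ₀ : ℝ) (m : ℕ) (ha1 : 1 ≤ a) (ham : a + 2 ≤ (m:ℝ)) (hm : 1 ≤ m)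
    (hb : 0 ≤ b) (hσσ' : σ' ≤ σ)
    (h1 : σ + 1/2 ≤ σ₀) (h2 : σ₀ ≤ σ + 3/2) (h1' : σ' + 1/2 ≤ σ₀) (h2' : σ₀ ≤ σ' + 3/2)
    (hside : (σ ≤ 0 ∧ σ' ≤ 0) ∨ 1 ≤ min σ σ' ∨ 1/4 ≤ b) :
    |HPkern a b σ - HPkern a b σ'| ≤ (HPCd a m + HPCb a m) * |σ - σ'| * HPkern a b σ₀ := by
  have ham' : a + 1 ≤ (m:ℝ) := by linarith
  by_cases hσpos : 0 < σ
  case neg =>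
    rw [HPkern_nonpos_eq a b σ hσpos,
      HPkern_nonpos_eq a b σ' (by intro h; exact hσpos (lt_of_lt_of_le h hσσ'))]
    simp only [sub_self, abs_zero]
    apply mul_nonneg (mul_nonneg _ (abs_nonneg _)) (HPkern_nonneg a b σ₀)
    linarith [HPCd_nonneg a m ha1, HPCb_nonneg a m]
  case pos =>
  have hσ₀ : 0 < σ₀ := by linarith
  have hk₀ : HPkern a b σ₀ = σ₀ ^ (-a) * Real.exp (-b/σ₀) := HPkern_pos_eq a b σ₀ hσ₀
  have hk₀0 : 0 ≤ HPkern a b σ₀ := HPkern_nonneg a b σ₀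
  by_cases hσ'pos : 0 < σ'
  · -- MVT case
    have hside' : 1 ≤ min σ σ' ∨ 1/4 ≤ b := by
      rcases hside with ⟨h, _⟩ | h | h
      · exact absurd hσpos (not_lt.mpr h)
      · exact Or.inl h
      · exact Or.inr h
    have hmvt : ∀ ξ ∈ Set.Icc σ' σ,
        HasDerivWithinAt (HPkern a b)
          ((fun ξ => (b/ξ^2 - a/ξ) * (ξ ^ (-a) * Real.exp (-b/ξ))) ξ) (Set.Icc σ' σ) ξ := by
      intro ξ hξ
      exact (HPkern_hasDerivAt a b ξ (lt_of_lt_of_le hσ'pos hξ.1)).hasDerivWithinAt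
    have hbound : ∀ ξ ∈ Set.Icc σ' σ,
        ‖(b/ξ^2 - a/ξ) * (ξ ^ (-a) * Real.exp (-b/ξ))‖ ≤ HPCd a m * HPkern a b σ₀ := by
      intro ξ hξ
      have hξp : 0 < ξ := lt_of_lt_of_le hσ'pos hξ.1
      have habs : |b/ξ^2 - a/ξ| ≤ b/ξ^2 + a/ξ := by
        have hq1 : (0:ℝ) ≤ b/ξ^2 := by positivity
        have hq2 : (0:ℝ) ≤ a/ξ := div_nonneg (by linarith) hξp.le
        rw [abs_le]; constructor <;> [nlinarith; nlinarith]
      have hfac : (0:ℝ) ≤ ξ ^ (-a) * Real.exp (-b/ξ) := by positivity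
      rw [Real.norm_eq_abs, abs_mul, abs_of_nonneg hfac]
      calc |b/ξ^2 - a/ξ| * (ξ ^ (-a) * Real.exp (-b/ξ))
          ≤ (b/ξ^2 + a/ξ) * (ξ ^ (-a) * Real.exp (-b/ξ)) :=
            mul_le_mul_of_nonneg_right habs hfac
      _ ≤ HPCd a m * (σ₀ ^ (-a) * Real.exp (-b/σ₀)) := by
            apply HPestD a b ξ σ₀ m ha1 ham hb hξp (by linarith [hξ.2]) (by linarith [hξ.1]) _
            rcases hside' with h | h
            · exact Or.inl (le_trans (le_trans h (min_le_right σ σ')) hξ.1)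
            · exact Or.inr h
      _ = HPCd a m * HPkern a b σ₀ := by rw [hk₀]
    have hmvt2 := Convex.norm_image_sub_le_of_norm_hasDerivWithin_le hmvt hbound (convex_Icc σ' σ)
      (Set.left_mem_Icc.mpr hσσ') (Set.right_mem_Icc.mpr hσσ')
    rw [Real.norm_eq_abs, Real.norm_eq_abs] at hmvt2
    calc |HPkern a b σ - HPkern a b σ'| ≤ HPCd a m * HPkern a b σ₀ * |σ - σ'| := hmvt2
    _ ≤ (HPCd a m + HPCb a m) * |σ - σ'| * HPkern a b σ₀ := by
        nlinarith [HPCb_nonneg a m, abs_nonneg (σ - σ'), hk₀0,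
          mul_nonneg (mul_nonneg (HPCb_nonneg a m) (abs_nonneg (σ - σ'))) hk₀0]
  · -- jump case : σ' ≤ 0 < σ
    have hσ'0 : σ' ≤ 0 := not_lt.mp hσ'pos
    have hbq : 1/4 ≤ b := by
      rcases hside with ⟨h, _⟩ | h | h
      · exact absurd hσpos (not_lt.mpr h)
      · exact absurd (le_trans h (min_le_right σ σ')) (by linarith)
      · exact h
    rw [HPkern_nonpos_eq a b σ' hσ'pos, sub_zero, HPkern_pos_eq a b σ hσpos,
      abs_of_nonneg (by positivity)]
    have hstep := HPestB a b σ σ₀ m ha1 ham' hm hbq hσpos h1 h2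
    have hσle : σ ≤ |σ - σ'| := by
      rw [abs_of_nonneg (by linarith)]; linarith
    calc σ ^ (-a) * Real.exp (-b/σ)
        ≤ HPCb a m * (σ * (σ₀ ^ (-a) * Real.exp (-b/σ₀))) := hstep
    _ = HPCb a m * σ * HPkern a b σ₀ := by rw [hk₀]; ring
    _ ≤ HPCb a m * |σ - σ'| * HPkern a b σ₀ := by
        apply mul_le_mul_of_nonneg_right _ hk₀0
        exact mul_le_mul_of_nonneg_left hσle (HPCb_nonneg a m)
    _ ≤ (HPCd a m + HPCb a m) * |σ - σ'| * HPkern a b σ₀ := by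
        apply mul_le_mul_of_nonneg_right _ hk₀0
        apply mul_le_mul_of_nonneg_right _ (abs_nonneg _)
        linarith [HPCd_nonneg a m ha1]

lemma HPmaster (a b σ σ' σ₀ : ℝ) (m : ℕ) (ha1 : 1 ≤ a) (ham : a + 2 ≤ (m:ℝ)) (hm : 1 ≤ m)
    (hb : 0 ≤ b)
    (h1 : σ + 1/2 ≤ σ₀) (h2 : σ₀ ≤ σ + 3/2) (h1' : σ' + 1/2 ≤ σ₀) (h2' : σ₀ ≤ σ' + 3/2)
    (hside : (σ ≤ 0 ∧ σ' ≤ 0) ∨ 1 ≤ min σ σ' ∨ 1/4 ≤ b) :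
    |HPkern a b σ - HPkern a b σ'| ≤ (HPCd a m + HPCb a m) * |σ - σ'| * HPkern a b σ₀ := by
  rcases le_total σ' σ with h | h
  · exact HPmaster_aux a b σ' σ σ₀ m ha1 ham hm hb h h1 h2 h1' h2' hside
  · rw [abs_sub_comm (HPkern a b σ), abs_sub_comm σ]
    apply HPmaster_aux a b σ σ' σ₀ m ha1 ham hm hb h h1' h2' h1 h2
    rcases hside with ⟨hA, hB⟩ | hmin | hb4
    · exact Or.inl ⟨hB, hA⟩
    · exact Or.inr (Or.inl (by rwa [min_comm]))
    · exact Or.inr (Or.inr hb4)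

/-- Homogeneous part, regularity in time: there is `C = C(n,s)` such that whenever `v` is the
homogeneous part (with `f ≥ 0` vanishing on `Q = B₂(0)×(0,3)`) and `|v| ≤ M` on `Q`, then for
every `x ∈ B₁(0)` and `t, t̄ ∈ (1,2)`, `|v(x,t) - v(x,t̄)| ≤ C M |t - t̄|`; in particular for
every `α ∈ (0,1)`, `|v(x,t) - v(x,t̄)| ≤ C M |t - t̄|^α`. -/
theorem homogeneous_part_time_regularity
    (n : ℕ) (hn : 2 ≤ n) (s : ℝ) (hs0 : 0 < s) (hs1 : s < 1) :
    ∃ C : ℝ, 0 < C ∧ ∀ f v : Euc n → ℝ → ℝ,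
      Measurable (Function.uncurry f) →
      (∀ y τ, 0 ≤ f y τ) →
      (∀ y τ, ‖y‖ < 2 → τ ∈ Set.Ioo (0 : ℝ) 3 → f y τ = 0) →
      (∀ x t, ‖x‖ < 2 → t ∈ Set.Ioo (0 : ℝ) 3 →
        Integrable (fun p : Euc n × ℝ =>
          f p.1 p.2 * fracHeatKernel n s (x - p.1) (t - p.2))) →
      (∀ x t, v x t = ∫ p : Euc n × ℝ,
          f p.1 p.2 * fracHeatKernel n s (x - p.1) (t - p.2)) →
      ∀ M : ℝ, (∀ x t, ‖x‖ < 2 → t ∈ Set.Ioo (0 : ℝ) 3 → |v x t| ≤ M) →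
        ∀ x : Euc n, ‖x‖ < 1 →
          ∀ t t' : ℝ, t ∈ Set.Ioo (1 : ℝ) 2 → t' ∈ Set.Ioo (1 : ℝ) 2 →
            |v x t - v x t'| ≤ C * M * |t - t'| ∧
            ∀ α ∈ Set.Ioo (0 : ℝ) 1, |v x t - v x t'| ≤ C * M * |t - t'| ^ α := by
  classical
  set a : ℝ := (n:ℝ)/2 + 1 - s with ha_def
  set m : ℕ := n + 3 with hm_def
  have hn2 : (2:ℝ) ≤ (n:ℝ) := by exact_mod_cast hn
  have ha1 : 1 ≤ a := by rw [ha_def]; linarith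
  have ham : a + 2 ≤ (m:ℝ) := by rw [ha_def, hm_def]; push_cast; linarith
  have hm1 : 1 ≤ m := by omega
  set c₀ : ℝ := (4*Real.pi) ^ (-(n:ℝ)/2) * |Real.Gamma (-s)|⁻¹ with hc₀
  have hπ : (0:ℝ) < 4*Real.pi := by linarith [Real.pi_pos]
  have hΓ : Real.Gamma (-s) ≠ 0 := by
    apply Real.Gamma_ne_zero
    intro k hk
    have hsk : s = (k:ℝ) := by linarith [neg_inj.mp hk]
    rcases Nat.eq_zero_or_pos k with h | h
    · subst h; simp at hsk; linarith
    · have : (1:ℝ) ≤ (k:ℝ) := by exact_mod_cast h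
      linarith
  have hc₀pos : 0 < c₀ :=
    mul_pos (Real.rpow_pos_of_pos hπ _) (inv_pos.mpr (abs_pos.mpr hΓ))
  have hGeq : ∀ (z : Euc n) (τ : ℝ),
      fracHeatKernel n s z τ = c₀ * HPkern a (‖z‖^2/4) τ := by
    intro z τ
    unfold fracHeatKernel HPkern
    by_cases h : 0 < τ
    · rw [if_pos h, if_pos h]
      have harg : -‖z‖^2/(4*τ) = -(‖z‖^2/4)/τ := by ring
      rw [harg, hc₀]
      ring
    · rw [if_neg h, if_neg h, mul_zero]
  have hCd0 := HPCd_nonneg a m ha1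
  have hCb0 := HPCb_nonneg a m
  have hCpos : 0 < HPCd a m + HPCb a m := by
    have h5 : (0:ℝ) < (5/2:ℝ)^a := Real.rpow_pos_of_pos (by norm_num) a
    have h6 : (0:ℝ) ≤ (a+10)*(40*(m:ℝ))^m := mul_nonneg (by linarith) (by positivity)
    have hCd : 0 < HPCd a m := by unfold HPCd; exact mul_pos h5 (by linarith)
    linarith
  refine ⟨HPCd a m + HPCb a m, hCpos, ?_⟩
  intro f v hfm hf0 hfQ hint hv M hM x hx t t' ht ht'
  obtain ⟨ht1, ht2⟩ := ht
  obtain ⟨ht1', ht2'⟩ := ht'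
  have hx2 : ‖x‖ < 2 := by linarith
  have h52 : (5/2:ℝ) ∈ Set.Ioo (0:ℝ) 3 := by constructor <;> norm_num
  -- pointwise estimate
  have hpt : ∀ (y : Euc n) (τ : ℝ),
      |f y τ * fracHeatKernel n s (x - y) (t - τ)
        - f y τ * fracHeatKernel n s (x - y) (t' - τ)|
      ≤ ((HPCd a m + HPCb a m) * |t - t'|) *
          (f y τ * fracHeatKernel n s (x - y) ((5/2:ℝ) - τ)) := by
    intro y τ
    by_cases hcase : ‖y‖ < 2 ∧ τ ∈ Set.Ioo (0:ℝ) 3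
    · rw [hfQ y τ hcase.1 hcase.2]
      simp
    · set b : ℝ := ‖x - y‖^2/4 with hb_def
      have hb0 : 0 ≤ b := by positivity
      have hside : ((t - τ ≤ 0 ∧ t' - τ ≤ 0) ∨ 1 ≤ min (t - τ) (t' - τ) ∨ 1/4 ≤ b) := by
        by_cases h2y : 2 ≤ ‖y‖
        · right; right
          have hxy1 : (1:ℝ) ≤ ‖x - y‖ := by
            have h3 := norm_sub_norm_le y x
            have hrev : ‖y - x‖ = ‖x - y‖ := norm_sub_rev y x
            linarith
          rw [hb_def]
          nlinarith
        · push_neg at h2y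
          have hτ : τ ∉ Set.Ioo (0:ℝ) 3 := fun h => hcase ⟨h2y, h⟩
          rw [Set.mem_Ioo] at hτ; push_neg at hτ
          by_cases hτ0 : 0 < τ
          · exact Or.inl ⟨by linarith [hτ hτ0], by linarith [hτ hτ0]⟩
          · push_neg at hτ0
            exact Or.inr (Or.inl (le_min (by linarith) (by linarith)))
      have hmaster := HPmaster a b (t - τ) (t' - τ) ((5/2:ℝ) - τ) m ha1 ham hm1 hb0
        (by linarith) (by linarith) (by linarith) (by linarith) hside
      have hdiff : (t - τ) - (t' - τ) = t - t' := by ring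
      rw [hdiff] at hmaster
      simp only [hGeq]
      rw [← hb_def]
      calc |f y τ * (c₀ * HPkern a b (t - τ)) - f y τ * (c₀ * HPkern a b (t' - τ))|
          = (f y τ * c₀) * |HPkern a b (t - τ) - HPkern a b (t' - τ)| := by
            rw [← abs_of_nonneg (mul_nonneg (hf0 y τ) hc₀pos.le), ← abs_mul]
            congr 1; ring
      _ ≤ (f y τ * c₀) *
            ((HPCd a m + HPCb a m) * |t - t'| * HPkern a b ((5/2:ℝ) - τ)) :=
            mul_le_mul_of_nonneg_left hmaster (mul_nonneg (hf0 y τ) hc₀pos.le)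
      _ = ((HPCd a m + HPCb a m) * |t - t'|) *
            (f y τ * (c₀ * HPkern a b ((5/2:ℝ) - τ))) := by ring
  -- integral part
  have hIt := hint x t hx2 ⟨by linarith, by linarith⟩
  have hIt' := hint x t' hx2 ⟨by linarith, by linarith⟩
  have hI5 := hint x (5/2:ℝ) hx2 h52
  have hvM := hM x (5/2:ℝ) hx2 h52
  have hM0 : 0 ≤ M := le_trans (abs_nonneg _) hvM
  have hv5 : v x (5/2:ℝ) ≤ M := (abs_le.mp hvM).2
  have hkey : |v x t - v x t'| ≤ (HPCd a m + HPCb a m) * M * |t - t'| := by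
    rw [hv x t, hv x t', ← integral_sub hIt hIt']
    calc |∫ p : Euc n × ℝ, (f p.1 p.2 * fracHeatKernel n s (x - p.1) (t - p.2)
            - f p.1 p.2 * fracHeatKernel n s (x - p.1) (t' - p.2))|
        ≤ ∫ p : Euc n × ℝ, |f p.1 p.2 * fracHeatKernel n s (x - p.1) (t - p.2)
            - f p.1 p.2 * fracHeatKernel n s (x - p.1) (t' - p.2)| := by
          simpa [Real.norm_eq_abs] using
            norm_integral_le_integral_norm
              (fun p : Euc n × ℝ => f p.1 p.2 * fracHeatKernel n s (x - p.1) (t - p.2)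
                - f p.1 p.2 * fracHeatKernel n s (x - p.1) (t' - p.2))
    _ ≤ ∫ p : Euc n × ℝ, ((HPCd a m + HPCb a m) * |t - t'|) *
            (f p.1 p.2 * fracHeatKernel n s (x - p.1) ((5/2:ℝ) - p.2)) := by
          apply integral_mono ((hIt.sub hIt').abs) (hI5.const_mul _)
          exact fun p => hpt p.1 p.2
    _ = ((HPCd a m + HPCb a m) * |t - t'|) *
            ∫ p : Euc n × ℝ, f p.1 p.2 * fracHeatKernel n s (x - p.1) ((5/2:ℝ) - p.2) :=
          integral_const_mul _ _
    _ = ((HPCd a m + HPCb a m) * |t - t'|) * v x (5/2:ℝ) := by rw [← hv x (5/2:ℝ)]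
    _ ≤ ((HPCd a m + HPCb a m) * |t - t'|) * M :=
          mul_le_mul_of_nonneg_left hv5 (mul_nonneg hCpos.le (abs_nonneg _))
    _ = (HPCd a m + HPCb a m) * M * |t - t'| := by ring
  refine ⟨hkey, ?_⟩
  rintro α ⟨hα0, hα1⟩
  have hle : |t - t'| ≤ |t - t'| ^ α := by
    rcases eq_or_ne t t' with h | h
    · rw [h, sub_self, abs_zero, Real.zero_rpow (ne_of_gt hα0)]
    · have h0 : 0 < |t - t'| := abs_pos.mpr (sub_ne_zero.mpr h)
      have hlt : |t - t'| ≤ 1 := le_of_lt (abs_lt.mpr ⟨by linarith, by linarith⟩)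
      calc |t - t'| = |t - t'| ^ (1:ℝ) := (Real.rpow_one _).symm
      _ ≤ |t - t'| ^ α := Real.rpow_le_rpow_of_exponent_ge h0 hlt hα1.le
  calc |v x t - v x t'| ≤ (HPCd a m + HPCb a m) * M * |t - t'| := hkey
  _ ≤ (HPCd a m + HPCb a m) * M * |t - t'| ^ α :=
      mul_le_mul_of_nonneg_left hle (mul_nonneg hCpos.le hM0)

end
end
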